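/- arXiv:2106.09940 — 3 statements merged into one kernel-verified Lean document; each statement's English description precedes it below -/
import Mathlib

section
/- A 0–1 matrix with pairwise distinct rows, pairwise distinct columns, and at least 2^k + 1 rows has rank at least k + 1 over the rationals. -/
theorem stmt_0 (m n k : ℕ) (M : Matrix (Fin m) (Fin n) ℚ)
    (h01 : ∀ i j, M i j = 0 ∨ M i j = 1)
    (hrows : Function.Injective M)
    (hcols : Function.Injective M.transpose)
    (hm : 2 ^ k + 1 ≤ m) :
    k + 1 ≤ M.rank := by
  -- Let t be the set of columns of M.
  set t : Set (Fin m → ℚ) := Set.range M.transpose with ht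
  obtain ⟨b, hbt, hspan, hli⟩ := exists_linearIndependent ℚ t
  have hbfin : b.Finite := hli.setFinite
  haveI : Fintype b := hbfin.fintype
  have hcard : Fintype.card b = M.rank := by
    rw [Matrix.rank_eq_finrank_span_cols]
    change Fintype.card b = Module.finrank ℚ (Submodule.span ℚ t)
    rw [← hspan,
      finrank_span_set_eq_card hli, Set.toFinset_card]
  -- every column of M lies in span b
  have hmem : ∀ j, M.transpose j ∈ Submodule.span ℚ b := fun j => by
    rw [hspan]; exact Submodule.subset_span ⟨j, rfl⟩
  -- the map sending row i to its values on basis columns is injective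
  have hinj : Function.Injective (fun i : Fin m => fun v : b => decide ((v : Fin m → ℚ) i = 1)) := by
    intro i1 i2 h
    apply hrows
    funext j
    have hvb : ∀ v ∈ b, v i1 = v i2 := by
      intro v hv
      obtain ⟨j', hj'⟩ := hbt hv
      have h1 := congrFun h ⟨v, hv⟩
      simp only [decide_eq_decide] at h1
      have e1 : v i1 = M i1 j' := by rw [← hj']; rfl
      have e2 : v i2 = M i2 j' := by rw [← hj']; rfl
      rcases h01 i1 j' with h0 | h0 <;> rcases h01 i2 j' with h0' | h0' <;>
        simp_all
    -- extend to span
    have hsp : ∀ v ∈ Submodule.span ℚ b, v i1 = v i2 := by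
      intro v hv
      induction hv using Submodule.span_induction with
      | mem v hv => exact hvb v hv
      | zero => rfl
      | add x y _ _ hx hy => simp [hx, hy]
      | smul c x _ hx => simp [hx]
    exact hsp _ (hmem j)
  have hle : m ≤ 2 ^ M.rank := by
    have := Fintype.card_le_of_injective _ hinj
    simpa [hcard] using this
  have : 2 ^ k < 2 ^ M.rank := lt_of_lt_of_le (by omega) hle
  have := (pow_lt_pow_iff_right₀ (by norm_num : (1:ℕ) < 2)).mp this
  omega
end

section
/- For a prime p and a 0–1 matrix M of size at most d such that no square 0–1 submatrix has determinant a nonzero multiple of p, the number of vectors v ∈ 𝔽_p^d with Mv = 0 equals p^{d - r}, where r is the rank of M over ℚ. -/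
open Matrix Function Module Submodule

/-- From any finite family of vectors, extract an injective index family of size
`finrank` of the span which is linearly independent. -/
lemma aux_extract {K V : Type*} [Field K] [AddCommGroup V] [Module K V]
    {ι : Type*} [Fintype ι] (v : ι → V) {n : ℕ}
    (hn : n = finrank K (span K (Set.range v))) :
    ∃ f : Fin n → ι, Function.Injective f ∧ LinearIndependent K (v ∘ f) := by
  classical
  obtain ⟨b, hbt, hspan, hli⟩ := exists_linearIndependent K (Set.range v)
  have hbfin : b.Finite := (Set.finite_range v).subset hbt
  haveI : Fintype b := hbfin.fintype
  have hcard : Fintype.card b = n := by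
    rw [hn, ← hspan, finrank_span_set_eq_card hli, Set.toFinset_card]
  obtain ⟨e⟩ : Nonempty (Fin n ≃ b) := ⟨(Fintype.equivFinOfCardEq hcard).symm⟩
  have hpre : ∀ k : Fin n, ∃ i : ι, v i = (e k : V) := fun k => hbt (e k).2
  choose f hf using hpre
  refine ⟨f, ?_, ?_⟩
  · intro k₁ k₂ h
    apply e.injective
    apply Subtype.ext
    rw [← hf k₁, ← hf k₂, h]
  · have : v ∘ f = (fun x : b => (x : V)) ∘ e := by
      funext k; simp [hf k]
    rw [this]
    exact hli.comp e e.injective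

lemma aux_rank_le {K : Type*} [Field K] {m d r : ℕ}
    (A : Matrix (Fin m) (Fin d) K) (f : Fin r → Fin m) (g : Fin r → Fin d)
    (h : (A.submatrix f g).det ≠ 0) : r ≤ A.rank := by
  classical
  have hU : IsUnit (A.submatrix f g) := by
    rw [Matrix.isUnit_iff_isUnit_det]
    exact isUnit_iff_ne_zero.mpr h
  have hrows : LinearIndependent K (fun i => (A.submatrix f g) i) :=
    Matrix.linearIndependent_rows_iff_isUnit.mpr hU
  have hli : LinearIndependent K (A ∘ f) := by
    have hcomp : (fun i => (A.submatrix f g) i) =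
        (LinearMap.funLeft K K g) ∘ (A ∘ f) := by
      funext i; rfl
    rw [hcomp] at hrows
    exact hrows.of_comp _
  have h1 : r = finrank K (span K (Set.range (A ∘ f))) := by
    rw [finrank_span_eq_card hli, Fintype.card_fin]
  rw [A.rank_eq_finrank_span_row, h1]
  exact Submodule.finrank_mono (span_mono (Set.range_comp_subset_range f A))

lemma aux_exists_minor {K : Type*} [Field K] {m d : ℕ}
    (A : Matrix (Fin m) (Fin d) K) :
    ∃ (f : Fin A.rank → Fin m) (g : Fin A.rank → Fin d),
      Function.Injective f ∧ Function.Injective g ∧ (A.submatrix f g).det ≠ 0 := by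
  classical
  obtain ⟨f, hf, hlif⟩ := aux_extract A A.rank_eq_finrank_span_row
  set B : Matrix (Fin A.rank) (Fin d) K := A.submatrix f id with hB
  have hBrows : LinearIndependent K (fun i => B i) := hlif
  have hBrank : B.rank = A.rank := by
    have := LinearIndependent.rank_matrix hBrows
    rw [Fintype.card_fin] at this
    exact this
  have hBT : A.rank = finrank K (span K (Set.range Bᵀ)) := by
    have := Bᵀ.rank_eq_finrank_span_row
    rw [Matrix.rank_transpose, hBrank] at this
    exact this
  obtain ⟨g, hg, hlig⟩ := aux_extract Bᵀ hBT
  refine ⟨f, g, hf, hg, ?_⟩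
  have hcols : LinearIndependent K (fun i => (A.submatrix f g)ᵀ i) := hlig
  have hU : IsUnit (A.submatrix f g) :=
    Matrix.linearIndependent_cols_iff_isUnit.mp hcols
  intro h0
  rw [Matrix.isUnit_iff_isUnit_det, h0] at hU
  exact hU.ne_zero rfl

theorem stmt_2 (p : ℕ) (hp : p.Prime) (m d : ℕ) (hmd : m ≤ d)
    (M : Matrix (Fin m) (Fin d) ℤ)
    (h01 : ∀ i j, M i j = 0 ∨ M i j = 1)
    (hdet : ∀ (r : ℕ) (f : Fin r → Fin m) (g : Fin r → Fin d),
      Function.Injective f → Function.Injective g →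
      ¬ ((M.submatrix f g).det ≠ 0 ∧ (p : ℤ) ∣ (M.submatrix f g).det)) :
    Nat.card {v : Fin d → ZMod p // (M.map (Int.cast : ℤ → ZMod p)).mulVec v = 0} =
      p ^ (d - (M.map (Int.cast : ℤ → ℚ)).rank) := by
  classical
  haveI : Fact p.Prime := ⟨hp⟩
  set Ap : Matrix (Fin m) (Fin d) (ZMod p) := M.map (Int.cast : ℤ → ZMod p) with hAp
  set Aq : Matrix (Fin m) (Fin d) ℚ := M.map (Int.cast : ℤ → ℚ) with hAq
  -- determinants of submatrices are casts
  have hdetP : ∀ (r : ℕ) (f : Fin r → Fin m) (g : Fin r → Fin d),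
      (Ap.submatrix f g).det = (((M.submatrix f g).det : ℤ) : ZMod p) := by
    intro r f g
    exact (RingHom.map_det (Int.castRingHom (ZMod p)) (M.submatrix f g)).symm
  have hdetQ : ∀ (r : ℕ) (f : Fin r → Fin m) (g : Fin r → Fin d),
      (Aq.submatrix f g).det = (((M.submatrix f g).det : ℤ) : ℚ) := by
    intro r f g
    exact (RingHom.map_det (Int.castRingHom ℚ) (M.submatrix f g)).symm
  -- rank equality
  have hrank : Ap.rank = Aq.rank := by
    apply le_antisymm
    · obtain ⟨f, g, hf, hg, h0⟩ := aux_exists_minor Ap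
      apply aux_rank_le Aq f g
      rw [hdetQ]
      rw [hdetP] at h0
      intro hc
      apply h0
      have : (M.submatrix f g).det = 0 := by exact_mod_cast hc
      rw [this]; simp
    · obtain ⟨f, g, hf, hg, h0⟩ := aux_exists_minor Aq
      apply aux_rank_le Ap f g
      rw [hdetP]
      rw [hdetQ] at h0
      have hz : (M.submatrix f g).det ≠ 0 := by
        intro hc; apply h0; rw [hc]; simp
      have hnd : ¬ (p : ℤ) ∣ (M.submatrix f g).det := by
        intro hdvd
        exact hdet _ f g hf hg ⟨hz, hdvd⟩
      rw [Ne, ZMod.intCast_zmod_eq_zero_iff_dvd]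
      exact_mod_cast hnd
  rw [← hrank]
  -- kernel cardinality
  have hker : Nat.card {v : Fin d → ZMod p // Ap.mulVec v = 0} =
      Nat.card (LinearMap.ker Ap.mulVecLin) := by
    apply Nat.card_congr
    apply Equiv.subtypeEquivRight
    intro v
    simp [LinearMap.mem_ker, Matrix.mulVecLin_apply]
  rw [hker]
  have hfin : finrank (ZMod p) (LinearMap.ker Ap.mulVecLin) = d - Ap.rank := by
    have h1 := LinearMap.finrank_range_add_finrank_ker Ap.mulVecLin
    have h2 : finrank (ZMod p) (Fin d → ZMod p) = d := by simp
    rw [h2] at h1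
    have h3 : Ap.rank = finrank (ZMod p) (LinearMap.range Ap.mulVecLin) := rfl
    omega
  haveI : Fintype (LinearMap.ker Ap.mulVecLin) := Fintype.ofFinite _
  rw [Nat.card_eq_fintype_card, card_eq_pow_finrank (K := ZMod p), ZMod.card, hfin]
end

section
/- For every d, there exists a polynomial χ_d(t) with integer coefficients such that for all sufficiently large primes p, the number of vectors v ∈ 𝔽_p^d having no nonempty subset of coordinates summing to zero equals χ_d(p). -/
open Finset Module Matrix

/-- Reduction mod `p` as a semilinear map on `Pi` types. -/
def redMap (ι : Type*) (p : ℕ) :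
    (ι → ℤ) →ₛₗ[Int.castRingHom (ZMod p)] (ι → ZMod p) where
  toFun x := fun i => ((x i : ℤ) : ZMod p)
  map_add' x y := by funext i; simp
  map_smul' c x := by funext i; simp

/-- Key lemma: the number of solutions mod `p` of an integer linear system is
`p ^ (n - k)` for a fixed `k`, for all sufficiently large primes `p`. -/
theorem card_ker_stable (ι : Type) [Fintype ι] [DecidableEq ι] (n : ℕ)
    (A : Matrix ι (Fin n) ℤ) :
    ∃ (k N : ℕ), k ≤ n ∧ ∀ p : ℕ, p.Prime → N ≤ p →
      Nat.card {v : Fin n → ZMod p //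
        (A.map (Int.cast : ℤ → ZMod p)).mulVec v = 0} = p ^ (n - k) := by
  classical
  set L : Submodule ℤ (ι → ℤ) := Submodule.span ℤ (Set.range Aᵀ) with hLdef
  obtain ⟨k, snf⟩ := L.smithNormalForm (Pi.basisFun ℤ ι)
  have ha : ∀ i, snf.a i ≠ 0 := by
    intro i h
    have h2 := snf.snf i
    rw [h, zero_smul] at h2
    exact snf.bN.ne_zero i (Subtype.coe_injective h2)
  set N : ℕ := (Finset.univ.sup fun i => (snf.a i).natAbs) + 1 with hNdef
  have main : ∀ p : ℕ, p.Prime → N ≤ p →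
      Nat.card {v : Fin n → ZMod p //
        (A.map (Int.cast : ℤ → ZMod p)).mulVec v = 0} = p ^ (n - k) ∧ k ≤ n := by
    intro p hp hNp
    haveI : Fact p.Prime := ⟨hp⟩
    have haP : ∀ i, ((snf.a i : ℤ) : ZMod p) ≠ 0 := by
      intro i h
      rw [ZMod.intCast_zmod_eq_zero_iff_dvd] at h
      have h2 : (p : ℤ) ≤ |snf.a i| :=
        Int.le_of_dvd (abs_pos.mpr (ha i)) ((dvd_abs _ _).mpr h)
      rw [Int.abs_eq_natAbs, Int.ofNat_le] at h2
      have h3 : (snf.a i).natAbs ≤ Finset.univ.sup fun i => (snf.a i).natAbs :=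
        Finset.le_sup (f := fun i => (snf.a i).natAbs) (Finset.mem_univ i)
      omega
    haveI : RingHomSurjective (Int.castRingHom (ZMod p)) := ⟨ZMod.intCast_surjective⟩
    set σ := Int.castRingHom (ZMod p)
    set π := redMap ι p with hπ
    set Ap := A.map (Int.cast : ℤ → ZMod p) with hAp
    have hcols : Set.range Apᵀ = π '' Set.range Aᵀ := by
      exact Set.range_comp (⇑π) (Aᵀ : Fin n → ι → ℤ)
    have hrange : LinearMap.range Ap.mulVecLin = Submodule.map π L := by
      rw [Matrix.range_mulVecLin, show Ap.col = Apᵀ from rfl, hcols, hLdef, Submodule.map_span]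
    set w : ι → (ι → ZMod p) := fun j => π (snf.bM j) with hw
    have hwli : LinearIndependent (ZMod p) w := by
      haveI hinv := (Pi.basisFun ℤ ι).invertibleToMatrix snf.bM
      have hdet : IsUnit ((Pi.basisFun ℤ ι).toMatrix snf.bM).det :=
        (Matrix.isUnit_iff_isUnit_det _).mp (isUnit_of_invertible _)
      have hdet2 : IsUnit ((((Pi.basisFun ℤ ι).toMatrix snf.bM).map σ)).det := by
        show IsUnit (σ.mapMatrix ((Pi.basisFun ℤ ι).toMatrix snf.bM)).det
        rw [← RingHom.map_det]
        exact hdet.map σ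
      have hli := Matrix.linearIndependent_cols_iff_isUnit.mpr
        ((Matrix.isUnit_iff_isUnit_det _).mpr hdet2)
      have hwe : w = fun j => (((Pi.basisFun ℤ ι).toMatrix snf.bM).map σ)ᵀ j := by
        funext j
        funext i
        simp [hw, hπ, redMap, Matrix.transpose_apply, Matrix.map_apply,
          Basis.toMatrix_apply, Pi.basisFun_repr]
      rw [hwe]
      exact hli
    have hu : LinearIndependent (ZMod p) (w ∘ snf.f) := hwli.comp snf.f snf.f.injective
    have hLspan : L = Submodule.span ℤ (Set.range fun i => (snf.bN i : ι → ℤ)) := by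
      conv_lhs => rw [← Submodule.map_subtype_top L]
      rw [← snf.bN.span_eq, Submodule.map_span, ← Set.range_comp]
      rfl
    have hgen : ∀ i, π ((snf.bN i : ι → ℤ)) = ((snf.a i : ℤ) : ZMod p) • w (snf.f i) := by
      intro i
      rw [snf.snf i, π.map_smulₛₗ]
      rfl
    have hmapL : Submodule.map π L = Submodule.span (ZMod p) (Set.range (w ∘ snf.f)) := by
      have h1 : Submodule.map π L =
          Submodule.span (ZMod p) (Set.range (π ∘ fun i => ((snf.bN i : ι → ℤ)))) := by
        conv_lhs => rw [hLspan]
        rw [Submodule.map_span, Set.range_comp]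
      rw [h1]
      apply le_antisymm
      · rw [Submodule.span_le]
        rintro x ⟨i, rfl⟩
        rw [Function.comp_apply, hgen]
        exact Submodule.smul_mem _ _ (Submodule.subset_span ⟨i, rfl⟩)
      · rw [Submodule.span_le]
        rintro x ⟨i, rfl⟩
        have hx : (w ∘ snf.f) i =
            (((snf.a i : ℤ) : ZMod p))⁻¹ • (((snf.a i : ℤ) : ZMod p) • w (snf.f i)) :=
          (inv_smul_smul₀ (haP i) _).symm
        rw [hx, ← hgen]
        exact Submodule.smul_mem _ _
          (Submodule.subset_span ⟨i, by rw [Function.comp_apply]⟩)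
    have hfinrange : finrank (ZMod p) (LinearMap.range Ap.mulVecLin) = k := by
      rw [hrange, hmapL, finrank_span_eq_card hu, Fintype.card_fin]
    have hrn := Ap.mulVecLin.finrank_range_add_finrank_ker
    rw [Module.finrank_fin_fun, hfinrange] at hrn
    haveI : Fintype ↥(LinearMap.ker Ap.mulVecLin) := Fintype.ofFinite _
    have hcard : Nat.card {v : Fin n → ZMod p // Ap.mulVec v = 0} =
        Nat.card ↥(LinearMap.ker Ap.mulVecLin) :=
      Nat.card_congr (Equiv.subtypeEquivRight fun v => by
        simp [LinearMap.mem_ker])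
    constructor
    · rw [hcard, Nat.card_eq_fintype_card, card_eq_pow_finrank (K := ZMod p), ZMod.card]
      congr 1
      omega
    · omega
  obtain ⟨p, hpN, hp⟩ := Nat.exists_infinite_primes N
  exact ⟨k, N, (main p hp hpN).2, fun q hq hqN => (main q hq hqN).1⟩

lemma card_subtype_sum {α : Type*} [Fintype α] (P : α → Prop) [DecidablePred P] :
    (Nat.card {x // P x} : ℤ) = ∑ x : α, if P x then 1 else 0 := by
  rw [Nat.card_eq_fintype_card, Fintype.card_subtype, Finset.card_filter]
  push_cast
  exact Finset.sum_congr rfl fun x _ => by split <;> simp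

theorem stmt_3 (d : ℕ) :
    ∃ (χ : Polynomial ℤ) (N : ℕ), ∀ p : ℕ, p.Prime → N ≤ p →
      (Nat.card {v : Fin d → ZMod p //
          ∀ I : Finset (Fin d), I.Nonempty → ∑ i ∈ I, v i ≠ 0} : ℤ) =
        χ.eval (p : ℤ) := by
  classical
  have key : ∀ t : Finset (Finset (Fin d)), ∃ (k N : ℕ), k ≤ d ∧ ∀ p : ℕ, p.Prime → N ≤ p →
      (Nat.card {v : Fin d → ZMod p // ∀ I ∈ t, ∑ i ∈ I, v i = 0} : ℤ) = (p : ℤ) ^ (d - k) := by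
    intro t
    set M : Matrix {I : Finset (Fin d) // I ∈ t} (Fin d) ℤ :=
      Matrix.of fun I i => if i ∈ I.1 then 1 else 0 with hM
    obtain ⟨k, N, hk, h⟩ := card_ker_stable {I : Finset (Fin d) // I ∈ t} d M
    refine ⟨k, N, hk, fun p hp hN => ?_⟩
    haveI : Fact p.Prime := ⟨hp⟩
    have hmv : ∀ (v : Fin d → ZMod p) (I : {I : Finset (Fin d) // I ∈ t}),
        ((M.map (Int.cast : ℤ → ZMod p)).mulVec v) I = ∑ i ∈ I.1, v i := by
      intro v I
      rw [Matrix.mulVec, dotProduct, ← Finset.univ_inter I.1, ← Finset.sum_ite_mem]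
      refine Finset.sum_congr rfl fun i _ => ?_
      simp [hM, Matrix.map_apply, apply_ite (Int.cast : ℤ → ZMod p), ite_mul]
    have e : Nat.card {v : Fin d → ZMod p // ∀ I ∈ t, ∑ i ∈ I, v i = 0} =
        Nat.card {v : Fin d → ZMod p //
          (M.map (Int.cast : ℤ → ZMod p)).mulVec v = 0} := by
      refine Nat.card_congr (Equiv.subtypeEquivRight fun v => ?_)
      rw [funext_iff]
      constructor
      · intro hv I
        rw [hmv v I, Pi.zero_apply]
        exact hv I.1 I.2
      · intro hv I hI
        have := hv ⟨I, hI⟩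
        rwa [hmv v ⟨I, hI⟩, Pi.zero_apply] at this
    rw [e, h p hp hN]
    push_cast
    rfl
  choose k N hk hcard using key
  refine ⟨∑ t ∈ ((Finset.univ : Finset (Finset (Fin d))).filter fun I => I.Nonempty).powerset,
      (-1 : Polynomial ℤ) ^ t.card * Polynomial.X ^ (d - k t),
    Finset.univ.sup N, fun p hp hpN => ?_⟩
  haveI : Fact p.Prime := ⟨hp⟩
  set U := (Finset.univ : Finset (Finset (Fin d))).filter (fun I => I.Nonempty) with hU
  rw [Polynomial.eval_finset_sum]
  simp only [Polynomial.eval_mul, Polynomial.eval_pow, Polynomial.eval_neg,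
    Polynomial.eval_one, Polynomial.eval_X]
  have step1 : (Nat.card {v : Fin d → ZMod p //
        ∀ I : Finset (Fin d), I.Nonempty → ∑ i ∈ I, v i ≠ 0} : ℤ)
      = ∑ v : Fin d → ZMod p, ∏ I ∈ U, (1 - if ∑ i ∈ I, v i = 0 then 1 else 0 : ℤ) := by
    rw [card_subtype_sum]
    refine Finset.sum_congr rfl fun v _ => ?_
    by_cases hv : ∀ I : Finset (Fin d), I.Nonempty → ∑ i ∈ I, v i ≠ 0
    · rw [if_pos hv, Finset.prod_eq_one]
      intro I hI
      rw [if_neg (hv I (by simpa [hU] using hI)), sub_zero]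
    · rw [if_neg hv]
      push_neg at hv
      obtain ⟨I, hI1, hI2⟩ := hv
      refine (Finset.prod_eq_zero (show I ∈ U by simp [hU, hI1]) ?_).symm
      rw [if_pos hI2]
      ring
  have step2 : ∀ v : Fin d → ZMod p, ∏ I ∈ U, (1 - if ∑ i ∈ I, v i = 0 then 1 else 0 : ℤ)
      = ∑ t ∈ U.powerset, (-1 : ℤ) ^ t.card *
          (if ∀ I ∈ t, ∑ i ∈ I, v i = 0 then 1 else 0) := by
    intro v
    have h1 : ∀ I : Finset (Fin d), (1 - if ∑ i ∈ I, v i = 0 then 1 else 0 : ℤ)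
        = (-(if ∑ i ∈ I, v i = 0 then 1 else 0) + 1) := fun I => by ring
    simp_rw [h1]
    rw [Finset.prod_add]
    refine Finset.sum_congr rfl fun t ht => ?_
    rw [Finset.prod_const_one, mul_one,
      show (∏ I ∈ t, -if ∑ i ∈ I, v i = 0 then (1 : ℤ) else 0)
          = ∏ I ∈ t, ((-1) * if ∑ i ∈ I, v i = 0 then (1 : ℤ) else 0) from
        Finset.prod_congr rfl fun i _ => by ring,
      Finset.prod_mul_distrib, Finset.prod_const, Finset.prod_boole]
    refine congrArg _ ?_
    by_cases h : ∀ I ∈ t, ∑ i ∈ I, v i = 0 <;> simp [h]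
  rw [step1]
  simp_rw [step2]
  rw [Finset.sum_comm]
  refine Finset.sum_congr rfl fun t ht => ?_
  rw [← Finset.mul_sum, ← card_subtype_sum, hcard t p hp
    (le_trans (Finset.le_sup (Finset.mem_univ t)) hpN)]
end
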